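/- Let P = (p_{ij}) be an irreducible stochastic matrix on a finite state space S, set D = I − P, and for each directed cycle c = (i_1, …, i_s) of pairwise distinct states define the circulation w_c = p_{i_1 i_2} ⋯ p_{i_s i_1} · D({i_1, …, i_s}ᶜ) / Σ_{j ∈ S} D({j}ᶜ). Then for every directed cycle c with reversed cycle c₋: w_c · (p_{i_1 i_s} p_{i_s i_{s-1}} ⋯ p_{i_2 i_1}) = w_{c₋} · (p_{i_1 i_2} p_{i_2 i_3} ⋯ p_{i_s i_1}). Consequently, if the product of transition probabilities along c is strictly larger than along c₋ and w_{c₋} > 0, then the net circulation w_c − w_{c₋} is strictly positive. -/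

import Mathlib

open scoped Classical

/-- A directed cycle `(i_0, …, i_len)` of pairwise distinct states in the state space
`Fin N`, understood cyclically. -/
structure MCycle (N : ℕ) where
  len : ℕ
  f : Fin (len + 1) → Fin N
  inj : Function.Injective f

/-- The reversed cycle `c₋` of a directed cycle `c = (i_1, i_2, …, i_s)`,
namely `(i_1, i_s, i_{s-1}, …, i_2)`, traversing `c` backwards. -/
def MCycle.reverse {N : ℕ} (c : MCycle N) : MCycle N :=
  ⟨c.len, fun l => c.f (-l), c.inj.comp neg_injective⟩

/-- The product of transition probabilities along the directed cycle `c`: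
`p_{i_1 i_2} p_{i_2 i_3} ⋯ p_{i_s i_1}`. -/
noncomputable def prodAlong {N : ℕ} (P : Matrix (Fin N) (Fin N) ℝ) (c : MCycle N) : ℝ :=
  ∏ l, P (c.f l) (c.f (l + 1))

/-- `subdet D H` is the determinant of the principal submatrix of `D` with rows and
columns indexed by the subset `H` (with `subdet D ∅ = 1`). -/
noncomputable def subdet {N : ℕ} (D : Matrix (Fin N) (Fin N) ℝ) (H : Finset (Fin N)) : ℝ :=
  (D.submatrix (fun x : H => (x : Fin N)) (fun x : H => (x : Fin N))).det

/-- The circulation of the directed cycle `c = (i_1, …, i_s)`: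
`w_c = p_{i_1 i_2} ⋯ p_{i_s i_1} · D({i_1, …, i_s}ᶜ) / ∑_{j} D({j}ᶜ)`, where `D = 1 − P`. -/
noncomputable def circulation {N : ℕ} (P : Matrix (Fin N) (Fin N) ℝ) (c : MCycle N) : ℝ :=
  prodAlong P c * subdet (1 - P) ((Finset.univ.image c.f)ᶜ)
    / ∑ j, subdet (1 - P) ({j}ᶜ)

/-- **Circulations of a cycle and its reversal.**  For an irreducible stochastic matrix
`P` on `Fin N` with circulations `w_c` given by the determinant formula, every directed
cycle `c` with reversed cycle `c₋` satisfies
`w_c · (p_{i_1 i_s} p_{i_s i_{s-1}} ⋯ p_{i_2 i_1}) = w_{c₋} · (p_{i_1 i_2} ⋯ p_{i_s i_1})`.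
Consequently, if the product of transition probabilities along `c` is strictly larger
than along `c₋` and `w_{c₋} > 0`, then the net circulation `w_c − w_{c₋}` is strictly
positive. -/
theorem circulation_reversal
    {N : ℕ} (hN : 0 < N) (P : Matrix (Fin N) (Fin N) ℝ)
    (hnn : ∀ i j, 0 ≤ P i j) (hrow : ∀ i, ∑ j, P i j = 1)
    (hirr : ∀ i j, ∃ n, 1 ≤ n ∧ 0 < (P ^ n) i j)
    (c : MCycle N) :
    circulation P c * prodAlong P c.reverse
        = circulation P c.reverse * prodAlong P c ∧
    (prodAlong P c.reverse < prodAlong P c → 0 < circulation P c.reverse →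
      0 < circulation P c - circulation P c.reverse) := by
  have himg : Finset.univ.image c.reverse.f = Finset.univ.image c.f := by
    ext x
    simp only [Finset.mem_image, Finset.mem_univ, true_and, MCycle.reverse]
    constructor
    · rintro ⟨l, hl⟩; exact ⟨-l, hl.2⟩
    · rintro ⟨l, hl⟩; exact ⟨-l, Finset.mem_univ _, by simpa using hl⟩
  set K : ℝ := subdet (1 - P) ((Finset.univ.image c.f)ᶜ)
      / ∑ j, subdet (1 - P) ({j}ᶜ) with hK
  have hc : circulation P c = prodAlong P c * K := by
    rw [circulation, hK, mul_div_assoc]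
  have hcr : circulation P c.reverse = prodAlong P c.reverse * K := by
    rw [circulation, himg, hK, mul_div_assoc]
  refine ⟨by rw [hc, hcr]; ring, ?_⟩
  intro hlt hpos
  rw [hcr] at hpos
  have hnn' : 0 ≤ prodAlong P c.reverse := Finset.prod_nonneg fun l _ => hnn _ _
  have hpr : 0 < prodAlong P c.reverse := by
    rcases hnn'.lt_or_eq with h | h
    · exact h
    · exfalso; rw [← h, zero_mul] at hpos; exact lt_irrefl _ hpos
  have hKpos : 0 < K := by nlinarith
  rw [hc, hcr, ← sub_mul]
  exact mul_pos (sub_pos.mpr hlt) hKpos
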